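/- Let N ≥ 2 and let ν be a probability measure on a finite set Ω invariant under transformations T_{i,i+1} (1 ≤ i ≤ N−1) exchanging adjacent blocks. For all functions f and all 1 ≤ i < j ≤ N, ν[(f∘T_{i,j} − f)^2] ≤ 4N Σ_{i'=1}^{N−1} ν[(f∘T_{i',i'+1} − f)^2], where T_{i,j} is the composition of nearest-neighbor exchanges moving block i to position j and back. -/

import Mathlib

private lemma foldl_invariant {Ω : Type*} [Fintype Ω] (N : ℕ) (ν : Ω → ℝ)
    (S : ℕ → Ω → Ω)
    (hinv : ∀ a, a + 1 < N → ∀ g : Ω → ℝ, ∑ ω : Ω, ν ω * g (S a ω) = ∑ ω : Ω, ν ω * g ω) :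
    ∀ (L : List ℕ), (∀ a ∈ L, a + 1 < N) → ∀ g : Ω → ℝ,
      ∑ ω : Ω, ν ω * g (List.foldl (fun σ a => S a σ) ω L) = ∑ ω : Ω, ν ω * g ω
  | [], _, g => rfl
  | (a :: L), h, g => by
    simp only [List.foldl_cons]
    have := hinv a (h a List.mem_cons_self)
      (fun ω' => g (List.foldl (fun σ b => S b σ) ω' L))
    rw [show (∑ ω : Ω, ν ω * g (List.foldl (fun σ b => S b σ) (S a ω) L))
        = ∑ ω : Ω, ν ω * (fun ω' => g (List.foldl (fun σ b => S b σ) ω' L)) (S a ω) from rfl,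
      this]
    exact foldl_invariant N ν S hinv L (fun b hb => h b (List.mem_cons_of_mem _ hb)) g

private lemma sum_range_getD (g : ℕ → ℝ) :
    ∀ (L : List ℕ), ∑ k ∈ Finset.range L.length, g (L.getD k 0) = (L.map g).sum
  | [] => by simp
  | (a :: L) => by
    rw [List.length_cons, Finset.sum_range_succ']
    simp only [List.getD_cons_succ, List.getD_cons_zero, List.map_cons, List.sum_cons]
    rw [sum_range_getD g L, add_comm]

/-- Let `ν` be a probability measure on a finite set `Ω`, invariant under
transformations `S a = T_{a,a+1}` (`0 ≤ a < N−1`) exchanging adjacent blocks.  For every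
`f` and `0 ≤ i < j < N`, with `T_{i,j}` defined as the palindromic composition of
nearest-neighbour exchanges moving block `i` to position `j` and back,
`ν[(f∘T_{i,j} − f)²] ≤ 4N Σ_{a} ν[(f∘T_{a,a+1} − f)²]`. -/
theorem exchange_comparison {Ω : Type*} [Fintype Ω] (N : ℕ) (hN : 2 ≤ N)
    (ν : Ω → ℝ) (hν0 : ∀ ω, 0 ≤ ν ω) (hν1 : ∑ ω : Ω, ν ω = 1)
    (S : ℕ → Ω → Ω)
    (hinv : ∀ a, a + 1 < N → ∀ g : Ω → ℝ, ∑ ω : Ω, ν ω * g (S a ω) = ∑ ω : Ω, ν ω * g ω)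
    (f : Ω → ℝ) (i j : ℕ) (hij : i < j) (hj : j < N) :
    ∑ ω : Ω, ν ω *
        (f (List.foldl (fun σ a => S a σ) ω
            (List.range' i (j - i) ++ (List.range' i (j - i - 1)).reverse)) - f ω) ^ 2 ≤
      4 * N * ∑ a ∈ Finset.range (N - 1), ∑ ω : Ω, ν ω * (f (S a ω) - f ω) ^ 2 := by
  classical
  set L : List ℕ := List.range' i (j - i) ++ (List.range' i (j - i - 1)).reverse with hL
  set E : ℕ → ℝ := fun a => ∑ ω : Ω, ν ω * (f (S a ω) - f ω) ^ 2 with hE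
  set n : ℕ := L.length with hn
  have hEnonneg : ∀ a, 0 ≤ E a := by
    intro a
    exact Finset.sum_nonneg fun ω _ => mul_nonneg (hν0 ω) (sq_nonneg _)
  have hmem : ∀ a ∈ L, a + 1 < N := by
    intro a ha
    rw [hL, List.mem_append, List.mem_reverse] at ha
    rcases ha with ha | ha <;> rw [List.mem_range'_1] at ha <;> omega
  -- telescoping pointwise
  have htel : ∀ ω : Ω, f (List.foldl (fun σ a => S a σ) ω L) - f ω
      = ∑ k ∈ Finset.range n,
          (f (List.foldl (fun σ a => S a σ) ω (L.take (k + 1)))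
            - f (List.foldl (fun σ a => S a σ) ω (L.take k))) := by
    intro ω
    rw [Finset.sum_range_sub (fun k => f (List.foldl (fun σ a => S a σ) ω (L.take k)))]
    rw [hn, List.take_length]
    simp
  have hstep : ∀ ω : Ω, ∀ k < n,
      List.foldl (fun σ a => S a σ) ω (L.take (k + 1))
        = S (L.getD k 0) (List.foldl (fun σ a => S a σ) ω (L.take k)) := by
    intro ω k hk
    have : L.take (k + 1) = L.take k ++ [L.getD k 0] := by
      rw [List.take_succ, List.getD_eq_getElem?_getD]
      rw [List.getElem?_eq_getElem hk]
      rfl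
    rw [this, List.foldl_append]
    rfl
  -- Cauchy–Schwarz pointwise, then sum
  have key : ∑ ω : Ω, ν ω * (f (List.foldl (fun σ a => S a σ) ω L) - f ω) ^ 2
      ≤ (n : ℝ) * ∑ k ∈ Finset.range n, E (L.getD k 0) := by
    have h1 : ∀ ω : Ω, (f (List.foldl (fun σ a => S a σ) ω L) - f ω) ^ 2
        ≤ (n : ℝ) * ∑ k ∈ Finset.range n,
            (f (List.foldl (fun σ a => S a σ) ω (L.take (k + 1)))
              - f (List.foldl (fun σ a => S a σ) ω (L.take k))) ^ 2 := by
      intro ω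
      rw [htel ω]
      have := sq_sum_le_card_mul_sum_sq (s := Finset.range n)
        (f := fun k => f (List.foldl (fun σ a => S a σ) ω (L.take (k + 1)))
          - f (List.foldl (fun σ a => S a σ) ω (L.take k))) (α := ℝ)
      simpa using this
    calc ∑ ω : Ω, ν ω * (f (List.foldl (fun σ a => S a σ) ω L) - f ω) ^ 2
        ≤ ∑ ω : Ω, ν ω * ((n : ℝ) * ∑ k ∈ Finset.range n,
            (f (List.foldl (fun σ a => S a σ) ω (L.take (k + 1)))
              - f (List.foldl (fun σ a => S a σ) ω (L.take k))) ^ 2) := by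
          exact Finset.sum_le_sum fun ω _ =>
            mul_le_mul_of_nonneg_left (h1 ω) (hν0 ω)
      _ = (n : ℝ) * ∑ k ∈ Finset.range n, ∑ ω : Ω, ν ω *
            (f (List.foldl (fun σ a => S a σ) ω (L.take (k + 1)))
              - f (List.foldl (fun σ a => S a σ) ω (L.take k))) ^ 2 := by
          simp_rw [Finset.mul_sum]
          rw [Finset.sum_comm]
          exact Finset.sum_congr rfl fun k _ => Finset.sum_congr rfl fun ω _ => by ring
      _ = (n : ℝ) * ∑ k ∈ Finset.range n, E (L.getD k 0) := by
          congr 1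
          apply Finset.sum_congr rfl
          intro k hk
          rw [Finset.mem_range] at hk
          have heq : ∀ ω : Ω, ν ω *
              (f (List.foldl (fun σ a => S a σ) ω (L.take (k + 1)))
                - f (List.foldl (fun σ a => S a σ) ω (L.take k))) ^ 2
              = ν ω * (fun ω' => (f (S (L.getD k 0) ω') - f ω') ^ 2)
                  (List.foldl (fun σ a => S a σ) ω (L.take k)) := by
            intro ω
            rw [hstep ω k hk]
          rw [Finset.sum_congr rfl fun ω _ => heq ω]
          simp only [hE]
          exact foldl_invariant N ν S hinv (L.take k)
            (fun a ha => hmem a (List.mem_of_mem_take ha))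
            (fun ω' => (f (S (L.getD k 0) ω') - f ω') ^ 2)
  -- bound the sum over the list by twice the full sum
  have hcount : ∀ a, L.count a ≤ 2 := by
    intro a
    rw [hL, List.count_append, List.count_reverse]
    have h1 := List.nodup_iff_count_le_one.1 (List.nodup_range' (s := i) (n := j - i)) a
    have h2 := List.nodup_iff_count_le_one.1 (List.nodup_range' (s := i) (n := j - i - 1)) a
    omega
  have hsum2 : ∑ k ∈ Finset.range n, E (L.getD k 0)
      ≤ 2 * ∑ a ∈ Finset.range (N - 1), E a := by
    rw [sum_range_getD E L, Finset.sum_list_map_count]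
    have hsub : L.toFinset ⊆ Finset.range (N - 1) := by
      intro a ha
      rw [List.mem_toFinset] at ha
      rw [Finset.mem_range]
      have := hmem a ha
      omega
    calc ∑ a ∈ L.toFinset, (L.count a) • E a
        ≤ ∑ a ∈ L.toFinset, 2 * E a := by
          apply Finset.sum_le_sum
          intro a _
          rw [nsmul_eq_mul]
          exact mul_le_mul_of_nonneg_right (by exact_mod_cast hcount a) (hEnonneg a)
      _ ≤ ∑ a ∈ Finset.range (N - 1), 2 * E a := by
          apply Finset.sum_le_sum_of_subset_of_nonneg hsub
          intro a _ _
          exact mul_nonneg (by norm_num) (hEnonneg a)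
      _ = 2 * ∑ a ∈ Finset.range (N - 1), E a := by rw [Finset.mul_sum]
  have hnle : (n : ℝ) ≤ 2 * N := by
    have : n = (j - i) + (j - i - 1) := by
      rw [hn, hL, List.length_append, List.length_reverse, List.length_range',
        List.length_range']
    have : n ≤ 2 * N := by omega
    exact_mod_cast this
  have hEsum : 0 ≤ ∑ a ∈ Finset.range (N - 1), E a :=
    Finset.sum_nonneg fun a _ => hEnonneg a
  calc ∑ ω : Ω, ν ω * (f (List.foldl (fun σ a => S a σ) ω L) - f ω) ^ 2
      ≤ (n : ℝ) * ∑ k ∈ Finset.range n, E (L.getD k 0) := key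
    _ ≤ (n : ℝ) * (2 * ∑ a ∈ Finset.range (N - 1), E a) := by
        apply mul_le_mul_of_nonneg_left hsum2 (Nat.cast_nonneg n)
    _ ≤ (2 * N) * (2 * ∑ a ∈ Finset.range (N - 1), E a) := by
        apply mul_le_mul_of_nonneg_right hnle
        exact mul_nonneg (by norm_num) hEsum
    _ = 4 * N * ∑ a ∈ Finset.range (N - 1), E a := by ring
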